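/- Let n ≥ 5 and let F be a 5-antichain saturated family of subsets of [n]. Then it is not the case that F contains exactly three sets of size i for every i with 1 ≤ i ≤ n − 1. -/

import Mathlib

open Finset

/-- A family `F` of finite subsets of ℕ contains a `k`-antichain: there are `k` sets in `F`
that are pairwise incomparable under inclusion. -/
def ContainsAntichain (k : ℕ) (F : Finset (Finset ℕ)) : Prop :=
  ∃ S ⊆ F, S.card = k ∧ ∀ A ∈ S, ∀ B ∈ S, A ≠ B → ¬ A ⊆ B

/-- `F` is a `k`-antichain saturated family of subsets of `[n] = {1, …, n}`:
all members are subsets of `[n]`, `F` contains no `k`-antichain, but adding any new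
subset of `[n]` creates a `k`-antichain. -/
def IsAntichainSaturated (n k : ℕ) (F : Finset (Finset ℕ)) : Prop :=
  (∀ A ∈ F, A ⊆ Finset.Icc 1 n) ∧
  ¬ ContainsAntichain k F ∧
  ∀ X ⊆ Finset.Icc 1 n, X ∉ F → ContainsAntichain k (insert X F)



/-- An antichain predicate matching `ContainsAntichain`'s inner condition. -/
def IsAC (S : Finset (Finset ℕ)) : Prop :=
  ∀ A ∈ S, ∀ B ∈ S, A ≠ B → ¬ A ⊆ B

/-- If `f` colors `G` with `< m` colors, fibers of `f` are chains, and `T ⊆ G` is an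
antichain of size `m`, then every color `i < m` is attained on `T`. -/
lemma chain_transversal (f : Finset ℕ → ℕ) (m : ℕ) (G T : Finset (Finset ℕ))
    (hT : T ⊆ G) (hcard : T.card = m) (hAC : IsAC T)
    (hlt : ∀ B ∈ G, f B < m)
    (hch : ∀ B ∈ G, ∀ C ∈ G, f B = f C → B ⊆ C ∨ C ⊆ B) :
    ∀ i, i < m → ∃ B ∈ T, f B = i := by
  have hinj : Set.InjOn f T := by
    intro B hB C hC hfe
    by_contra hne
    rcases hch B (hT hB) C (hT hC) hfe with h | h
    · exact hAC B hB C hC hne h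
    · exact hAC C hC B hB (Ne.symm hne) h
  have himage : T.image f = Finset.range m := by
    apply Finset.eq_of_subset_of_card_le
    · intro i hi
      obtain ⟨B, hB, rfl⟩ := Finset.mem_image.mp hi
      exact Finset.mem_range.mpr (hlt B (hT hB))
    · rw [Finset.card_image_of_injOn hinj, hcard, Finset.card_range]
  intro i hi
  have : i ∈ T.image f := himage ▸ Finset.mem_range.mpr hi
  obtain ⟨B, hB, hfB⟩ := Finset.mem_image.mp this
  exact ⟨B, hB, hfB⟩

/-- Dilworth's theorem (Galvin's proof), in coloring form: a finite family of finite sets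
with no antichain of size `k+1` can be colored with `k` colors so that each color class is
a chain under inclusion. -/
theorem dilworth (k : ℕ) : ∀ (F : Finset (Finset ℕ)),
    (¬ ∃ S ⊆ F, S.card = k + 1 ∧ IsAC S) →
    ∃ f : Finset ℕ → ℕ, (∀ B ∈ F, f B < k) ∧
      (∀ B ∈ F, ∀ C ∈ F, f B = f C → B ⊆ C ∨ C ⊆ B) := by
  induction k with
  | zero =>
    intro F hno
    refine ⟨fun _ => 0, ?_, ?_⟩
    · intro B hB
      exact absurd ⟨{B}, by simpa using hB, by simp, by intro A hA C hC hne; simp_all⟩ hno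
    · intro B hB
      exact absurd ⟨{B}, by simpa using hB, by simp, by intro A hA C hC hne; simp_all⟩ hno
  | succ k ih =>
    intro F
    induction F using Finset.strongInduction with
    | _ F ihF =>
      intro hno
      classical
      by_cases h1 : ∃ S ⊆ F, S.card = k + 1 ∧ IsAC S
      · -- Galvin's main case
        obtain ⟨S₀, hS₀F, hS₀c, _⟩ := h1
        have hFne : F.Nonempty := by
          have : S₀.Nonempty := Finset.card_pos.mp (by omega)
          exact ⟨this.choose, hS₀F this.choose_spec⟩
        obtain ⟨a, haF, hamax⟩ : ∃ a ∈ F, ∀ x ∈ F, ¬ a < x := by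
          obtain ⟨a, ha⟩ := F.exists_maximal hFne
          exact ⟨a, ha.1, fun x hx hlt => lt_irrefl _ (lt_of_lt_of_le hlt (ha.2 hx hlt.le))⟩
        set F' := F.erase a with hF'def
        have hF'ss : F' ⊂ F := Finset.erase_ssubset haF
        have hF'sub : F' ⊆ F := Finset.erase_subset _ _
        have hno' : ¬ ∃ S ⊆ F', S.card = k + 2 ∧ IsAC S := by
          rintro ⟨S, hS, hc, hac⟩
          exact hno ⟨S, hS.trans hF'sub, hc, hac⟩
        obtain ⟨f', hf'lt, hf'ch⟩ := ihF F' hF'ss hno'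
        by_cases h2 : ∃ S ⊆ F', S.card = k + 1 ∧ IsAC S
        · -- define U i and pick maximal elements
          have hU : ∀ i, i < k + 1 → ∃ A,
              (A ∈ F' ∧ f' A = i ∧ ∃ T ⊆ F', T.card = k + 1 ∧ IsAC T ∧ A ∈ T) ∧
              ∀ B, (B ∈ F' ∧ f' B = i ∧ ∃ T ⊆ F', T.card = k + 1 ∧ IsAC T ∧ B ∈ T) →
                ¬ A ⊂ B := by
            intro i hi
            set U : Finset (Finset ℕ) := F'.filter
              (fun c => f' c = i ∧ ∃ T ⊆ F', T.card = k + 1 ∧ IsAC T ∧ c ∈ T) with hUdef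
            have hUne : U.Nonempty := by
              obtain ⟨T, hTF', hTc, hTac⟩ := h2
              obtain ⟨B, hBT, hBf⟩ := chain_transversal f' (k+1) F' T hTF' hTc hTac hf'lt hf'ch i hi
              exact ⟨B, Finset.mem_filter.mpr ⟨hTF' hBT, hBf, T, hTF', hTc, hTac, hBT⟩⟩
            obtain ⟨A, hAU, hAmax⟩ : ∃ A ∈ U, ∀ x ∈ U, ¬ A < x := by
              obtain ⟨A, hA⟩ := U.exists_maximal hUne
              exact ⟨A, hA.1, fun x hx hlt => lt_irrefl _ (lt_of_lt_of_le hlt (hA.2 hx hlt.le))⟩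
            have hOK := Finset.mem_filter.mp hAU
            refine ⟨A, ⟨hOK.1, hOK.2.1, hOK.2.2⟩, ?_⟩
            intro B hB
            exact hAmax B (Finset.mem_filter.mpr ⟨hB.1, hB.2.1, hB.2.2⟩)
          choose aa haa hmaxa using hU
          -- aa i ∈ F', f' (aa i) = i, aa i in some (k+1)-antichain; maximal such
          -- antichain property of the aa's
          have hanti : ∀ i, (hi : i < k+1) → ∀ j, (hj : j < k+1) → i ≠ j →
              ¬ aa i hi ⊆ aa j hj := by
            intro i hi j hj hij hss
            obtain ⟨hjF', hjf, T, hTF', hTc, hTac, hjT⟩ := haa j hj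
            obtain ⟨c, hcT, hcf⟩ := chain_transversal f' (k+1) F' T hTF' hTc hTac hf'lt hf'ch i hi
            have hcU : (c ∈ F' ∧ f' c = i ∧ ∃ T ⊆ F', T.card = k + 1 ∧ IsAC T ∧ c ∈ T) :=
              ⟨hTF' hcT, hcf, T, hTF', hTc, hTac, hcT⟩
            have hcsub : c ⊆ aa i hi := by
              rcases hf'ch c (hTF' hcT) (aa i hi) (haa i hi).1 (by rw [hcf, (haa i hi).2.1]) with h | h
              · exact h
              · rcases eq_or_ne (aa i hi) c with he | hne
                · exact he ▸ Finset.Subset.refl _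
                · exact absurd (Finset.ssubset_iff_subset_ne.mpr ⟨h, hne⟩) (hmaxa i hi c hcU)
            have hcne : c ≠ aa j hj := by
              intro he
              have : f' c = j := he ▸ hjf
              omega
            exact hTac c hcT (aa j hj) hjT hcne (hcsub.trans hss)
          -- a is comparable to some aa i
          have hcomp : ∃ i, ∃ hi : i < k + 1, aa i hi ⊆ a := by
            by_contra hnc
            push_neg at hnc
            -- then also a ⊆ aa i fails (a maximal), so all incomparable: (k+2)-antichain
            have hnc2 : ∀ i, (hi : i < k+1) → ¬ a ⊆ aa i hi := by
              intro i hi hss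
              have hne : a ≠ aa i hi := by
                intro he
                exact hnc i hi (he ▸ Finset.Subset.refl _)
              exact hamax (aa i hi) (hF'sub (haa i hi).1)
                (Finset.ssubset_iff_subset_ne.mpr ⟨hss, hne⟩)
            set S : Finset (Finset ℕ) :=
              insert a ((Finset.range (k+1)).attach.image
                (fun i => aa i.1 (Finset.mem_range.mp i.2))) with hSdef
            have haniS : a ∉ (Finset.range (k+1)).attach.image
                (fun i => aa i.1 (Finset.mem_range.mp i.2)) := by
              intro hmem
              obtain ⟨i, _, hie⟩ := Finset.mem_image.mp hmem
              have := (haa i.1 (Finset.mem_range.mp i.2)).1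
              rw [hie] at this
              exact (Finset.notMem_erase a F) this
            have himgcard : ((Finset.range (k+1)).attach.image
                (fun i => aa i.1 (Finset.mem_range.mp i.2))).card = k + 1 := by
              rw [Finset.card_image_of_injOn, Finset.card_attach, Finset.card_range]
              intro i _ j _ he
              simp only at he
              have hi := (haa i.1 (Finset.mem_range.mp i.2)).2.1
              have hj := (haa j.1 (Finset.mem_range.mp j.2)).2.1
              rw [he] at hi
              exact Subtype.ext (hi.symm.trans hj)
            have hScard : S.card = k + 2 := by
              rw [hSdef, Finset.card_insert_of_notMem haniS, himgcard]
            have hSF : S ⊆ F := by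
              intro B hB
              rcases Finset.mem_insert.mp hB with rfl | hB
              · exact haF
              · obtain ⟨i, _, rfl⟩ := Finset.mem_image.mp hB
                exact hF'sub (haa i.1 (Finset.mem_range.mp i.2)).1
            have hSac : IsAC S := by
              intro B hB C hC hne hss
              rcases Finset.mem_insert.mp hB with hBa | hB'
              · subst hBa
                have hC' : C ∈ (Finset.range (k+1)).attach.image
                    (fun i => aa i.1 (Finset.mem_range.mp i.2)) := by
                  rcases Finset.mem_insert.mp hC with hCa | h
                  · exact absurd hCa.symm hne
                  · exact h
                obtain ⟨i, _, hie⟩ := Finset.mem_image.mp hC'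
                rw [← hie] at hss
                exact hnc2 i.1 (Finset.mem_range.mp i.2) hss
              · obtain ⟨i, _, hie⟩ := Finset.mem_image.mp hB'
                rw [← hie] at hss hne
                rcases Finset.mem_insert.mp hC with hCa | hC'
                · subst hCa
                  exact hnc i.1 (Finset.mem_range.mp i.2) hss
                · obtain ⟨j, _, hje⟩ := Finset.mem_image.mp hC'
                  rw [← hje] at hss hne
                  have hij : i.1 ≠ j.1 := by
                    intro he
                    have hi := (haa i.1 (Finset.mem_range.mp i.2)).2.1
                    have hj := (haa j.1 (Finset.mem_range.mp j.2)).2.1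
                    exact hne (by
                      have : i = j := Subtype.ext he
                      rw [this])
                  exact hanti i.1 (Finset.mem_range.mp i.2) j.1 (Finset.mem_range.mp j.2) hij hss
            exact hno ⟨S, hSF, hScard, hSac⟩
          obtain ⟨i₀, hi₀, hi₀sub⟩ := hcomp
          set a₀ := aa i₀ hi₀ with ha₀def
          set Rest : Finset (Finset ℕ) :=
            F.filter (fun B => ¬ (B = a ∨ (B ∈ F' ∧ f' B = i₀ ∧ B ⊆ a₀))) with hRdef
          have hRsub : Rest ⊆ F := Finset.filter_subset _ _
          have hRno : ¬ ∃ S ⊆ Rest, S.card = k + 1 ∧ IsAC S := by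
            rintro ⟨T, hTR, hTc, hTac⟩
            have hTF' : T ⊆ F' := by
              intro B hB
              have hBF := hRsub (hTR hB)
              have hBP := (Finset.mem_filter.mp (hTR hB)).2
              refine Finset.mem_erase.mpr ⟨?_, hBF⟩
              intro he
              exact hBP (Or.inl he)
            obtain ⟨c, hcT, hcf⟩ := chain_transversal f' (k+1) F' T hTF' hTc hTac hf'lt hf'ch i₀ hi₀
            have hcU : (c ∈ F' ∧ f' c = i₀ ∧ ∃ T ⊆ F', T.card = k + 1 ∧ IsAC T ∧ c ∈ T) :=
              ⟨hTF' hcT, hcf, T, hTF', hTc, hTac, hcT⟩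
            have hcsub : c ⊆ a₀ := by
              rcases hf'ch c (hTF' hcT) a₀ (haa i₀ hi₀).1 (by rw [hcf, (haa i₀ hi₀).2.1]) with h | h
              · exact h
              · rcases eq_or_ne a₀ c with he | hne
                · exact he ▸ Finset.Subset.refl _
                · exact absurd (Finset.ssubset_iff_subset_ne.mpr ⟨h, hne⟩) (hmaxa i₀ hi₀ c hcU)
            have := (Finset.mem_filter.mp (hTR hcT)).2
            exact this (Or.inr ⟨hTF' hcT, hcf, hcsub⟩)
          obtain ⟨g, hglt, hgch⟩ := ih Rest hRno
          refine ⟨fun B => if (B = a ∨ (B ∈ F' ∧ f' B = i₀ ∧ B ⊆ a₀)) then k else g B, ?_, ?_⟩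
          · intro B hB
            by_cases hK : (B = a ∨ (B ∈ F' ∧ f' B = i₀ ∧ B ⊆ a₀))
            · simp [hK]
            · simp only [if_neg hK]
              have : B ∈ Rest := Finset.mem_filter.mpr ⟨hB, hK⟩
              exact Nat.lt_succ_of_lt (hglt B this)
          · intro B hB C hC hfe
            by_cases hKB : (B = a ∨ (B ∈ F' ∧ f' B = i₀ ∧ B ⊆ a₀)) <;>
              by_cases hKC : (C = a ∨ (C ∈ F' ∧ f' C = i₀ ∧ C ⊆ a₀))
            · -- both in K : chain
              rcases hKB with rfl | ⟨hBF', hBf, hBsub⟩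
              · rcases hKC with rfl | ⟨hCF', hCf, hCsub⟩
                · exact Or.inl (Finset.Subset.refl _)
                · exact Or.inr (hCsub.trans hi₀sub)
              · rcases hKC with rfl | ⟨hCF', hCf, hCsub⟩
                · exact Or.inl (hBsub.trans hi₀sub)
                · exact hf'ch B hBF' C hCF' (by rw [hBf, hCf])
            · exfalso
              have hc' : g C < k := hglt C (Finset.mem_filter.mpr ⟨hC, hKC⟩)
              simp only [if_pos hKB, if_neg hKC] at hfe
              omega
            · exfalso
              have hb' : g B < k := hglt B (Finset.mem_filter.mpr ⟨hB, hKB⟩)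
              simp only [if_neg hKB, if_pos hKC] at hfe
              omega
            · simp only [if_neg hKB, if_neg hKC] at hfe
              exact hgch B (Finset.mem_filter.mpr ⟨hB, hKB⟩) C (Finset.mem_filter.mpr ⟨hC, hKC⟩) hfe
        · -- F' has no (k+1)-antichain: color F' with k colors, give a color k
          obtain ⟨g, hglt, hgch⟩ := ih F' h2
          refine ⟨fun B => if B = a then k else g B, ?_, ?_⟩
          · intro B hB
            by_cases hBa : B = a
            · simp [hBa]
            · simp only [if_neg hBa]
              exact Nat.lt_succ_of_lt (hglt B (Finset.mem_erase.mpr ⟨hBa, hB⟩))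
          · intro B hB C hC hfe
            by_cases hBa : B = a <;> by_cases hCa : C = a
            · subst hBa; subst hCa; exact Or.inl (Finset.Subset.refl _)
            · exfalso
              have := hglt C (Finset.mem_erase.mpr ⟨hCa, hC⟩)
              simp only [if_pos hBa, if_neg hCa] at hfe
              omega
            · exfalso
              have := hglt B (Finset.mem_erase.mpr ⟨hBa, hB⟩)
              simp only [if_neg hBa, if_pos hCa] at hfe
              omega
            · simp only [if_neg hBa, if_neg hCa] at hfe
              exact hgch B (Finset.mem_erase.mpr ⟨hBa, hB⟩) C (Finset.mem_erase.mpr ⟨hCa, hC⟩) hfe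
      · obtain ⟨g, hglt, hgch⟩ := ih F h1
        exact ⟨g, fun B hB => Nat.lt_succ_of_lt (hglt B hB), hgch⟩
section Kill
variable (n : ℕ) (F : Finset (Finset ℕ)) (f : Finset ℕ → ℕ)

set_option maxHeartbeats 1000000 in
/-- The "level‑3 kill": if `A'` is a 3‑set of `F`, the three other color classes have 2‑element
members `l₁,l₂,l₃ ⊆ A'`, and level 3 of `F` has exactly 3 sets, we reach a contradiction. -/
lemma kill3
    (hn : 5 ≤ n)
    (hsub : ∀ A ∈ F, A ⊆ Finset.Icc 1 n)
    (hflt : ∀ B ∈ F, f B < 4)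
    (hch : ∀ B ∈ F, ∀ C ∈ F, f B = f C → B ⊆ C ∨ C ⊆ B)
    (hsand : ∀ X : Finset ℕ, X ⊆ Finset.Icc 1 n →
      (∃ i, i < 4 ∧ ∀ B ∈ F, f B = i → B ⊆ X ∨ X ⊆ B) → X ∈ F)
    (hLv3 : (F.filter fun A => A.card = 3).card = 3)
    (A' : Finset ℕ) (hA'F : A' ∈ F) (hA'c : A'.card = 3)
    (l₁ l₂ l₃ : Finset ℕ)
    (hl₁F : l₁ ∈ F) (hl₂F : l₂ ∈ F) (hl₃F : l₃ ∈ F)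
    (hl₁c : l₁.card = 2) (hl₂c : l₂.card = 2) (hl₃c : l₃.card = 2)
    (hl₁A : l₁ ⊆ A') (hl₂A : l₂ ⊆ A') (hl₃A : l₃ ⊆ A')
    (hc12 : f l₁ ≠ f l₂) (hc13 : f l₁ ≠ f l₃) (hc23 : f l₂ ≠ f l₃)
    (hcA1 : f l₁ ≠ f A') (hcA2 : f l₂ ≠ f A') (hcA3 : f l₃ ≠ f A') :
    False := by
  classical
  set L3 := F.filter (fun A => A.card = 3) with hL3def
  clear_value L3
  have hL3mem : ∀ B : Finset ℕ, B ∈ L3 ↔ (B ∈ F ∧ B.card = 3) := by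
    intro B
    rw [hL3def]
    exact Finset.mem_filter
  have hA'L3 : A' ∈ L3 := (hL3mem A').mpr ⟨hA'F, hA'c⟩
  -- distinctness of the l's as sets
  have hl12 : l₁ ≠ l₂ := fun h => hc12 (by rw [h])
  have hl13 : l₁ ≠ l₃ := fun h => hc13 (by rw [h])
  have hl23 : l₂ ≠ l₃ := fun h => hc23 (by rw [h])
  -- a key step: if some 3-set Y of F contains two distinct l's then Y = A'
  have htwo : ∀ Y ∈ F, Y.card = 3 → ∀ u v : Finset ℕ, u ∈ F → v ∈ F →
      u.card = 2 → v.card = 2 → u ⊆ A' → v ⊆ A' → u ≠ v → u ⊆ Y → v ⊆ Y → Y = A' := by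
    intro Y hYF hYc u v huF hvF huc hvc huA hvA huv huY hvY
    have hnss : ¬ u ⊆ v := by
      intro h
      exact huv (Finset.eq_of_subset_of_card_le h (by omega))
    obtain ⟨x, hxu, hxv⟩ := Finset.not_subset.mp hnss
    have hins : insert x v ⊆ A' := Finset.insert_subset (huA hxu) hvA
    have hinsc : (insert x v).card = 3 := by
      rw [Finset.card_insert_of_notMem hxv, hvc]
    have hinsA : insert x v = A' :=
      Finset.eq_of_subset_of_card_le hins (by omega)
    have hA'Y : A' ⊆ Y := by
      rw [← hinsA]
      exact Finset.insert_subset (huY hxu) hvY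
    exact (Finset.eq_of_subset_of_card_le hA'Y (by omega)).symm
  -- find the "absent" l (color different from both non-A' level-3 sets)
  set Ys := L3.erase A' with hYsdef
  clear_value Ys
  have hYscard : Ys.card = 2 := by
    rw [hYsdef, Finset.card_erase_of_mem hA'L3, hLv3]
  obtain ⟨Y₁, Y₂, hY12, hYeq⟩ := Finset.card_eq_two.mp hYscard
  have hY₁ : Y₁ ∈ Ys := by rw [hYeq]; simp
  have hY₂ : Y₂ ∈ Ys := by rw [hYeq]; simp
  have hY₁L3 : Y₁ ∈ L3 := Finset.mem_of_mem_erase (hYsdef ▸ hY₁)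
  have hY₂L3 : Y₂ ∈ L3 := Finset.mem_of_mem_erase (hYsdef ▸ hY₂)
  have hY₁A : Y₁ ≠ A' := Finset.ne_of_mem_erase (hYsdef ▸ hY₁)
  have hY₂A : Y₂ ≠ A' := Finset.ne_of_mem_erase (hYsdef ▸ hY₂)
  have hY₁F : Y₁ ∈ F := ((hL3mem Y₁).mp hY₁L3).1
  have hY₂F : Y₂ ∈ F := ((hL3mem Y₂).mp hY₂L3).1
  have hY₁c : Y₁.card = 3 := ((hL3mem Y₁).mp hY₁L3).2
  have hY₂c : Y₂.card = 3 := ((hL3mem Y₂).mp hY₂L3).2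
  -- L3 as explicit set
  have hL3eq : L3 = insert A' {Y₁, Y₂} := by
    apply (Finset.eq_of_subset_of_card_le ?_ ?_).symm
    · intro B hB
      rcases Finset.mem_insert.mp hB with rfl | hB
      · exact hA'L3
      · rw [← hYeq] at hB
        exact Finset.mem_of_mem_erase (hYsdef ▸ hB)
    · rw [hLv3, Finset.card_insert_of_notMem (by simp [Ne.symm hY₁A, Ne.symm hY₂A]),
        Finset.card_pair hY12]
  -- existence of lG
  have hexG : (f l₁ ≠ f Y₁ ∧ f l₁ ≠ f Y₂) ∨ (f l₂ ≠ f Y₁ ∧ f l₂ ≠ f Y₂) ∨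
      (f l₃ ≠ f Y₁ ∧ f l₃ ≠ f Y₂) := by omega
  have hfl1 : f l₁ < 4 := hflt _ hl₁F
  have hfl2 : f l₂ < 4 := hflt _ hl₂F
  have hfl3 : f l₃ < 4 := hflt _ hl₃F
  have hfA : f A' < 4 := hflt _ hA'F
  -- reduce to a single situation
  have main : ∀ lG : Finset ℕ, lG ∈ F → lG.card = 2 → lG ⊆ A' → f lG ≠ f A' →
      f lG ≠ f Y₁ → f lG ≠ f Y₂ → False := by
    intro lG hlGF hlGc hlGA hlGfA hlGY₁ hlGY₂
    -- no 3-set of F other than A' contains lG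
    have hYnotsup : ∀ Y, Y ∈ L3 → Y ≠ A' → ¬ lG ⊆ Y := by
      intro Y hYL3 hYA hsubY
      have hYF : Y ∈ F := ((hL3mem Y).mp hYL3).1
      have hYc : Y.card = 3 := ((hL3mem Y).mp hYL3).2
      have hY12' : Y = Y₁ ∨ Y = Y₂ := by
        have : Y ∈ Ys := hYsdef ▸ Finset.mem_erase.mpr ⟨hYA, hYL3⟩
        rw [hYeq] at this
        simpa using this
      have hfYlG : f lG ≠ f Y := by
        rcases hY12' with rfl | rfl
        · exact hlGY₁
        · exact hlGY₂
      have hfY4 : f Y < 4 := hflt Y hYF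
      have hfYA : f Y ≠ f A' := by
        intro h
        rcases hch Y hYF A' hA'F h with hh | hh
        · exact hYA (Finset.eq_of_subset_of_card_le hh (by omega))
        · exact hYA (Finset.eq_of_subset_of_card_le hh (by omega)).symm
      have hbr : ∀ l : Finset ℕ, l ∈ F → l.card = 2 → l ⊆ A' → f Y = f l → False := by
        intro l hlF hlc hlA hfe
        have hsubl : l ⊆ Y := by
          rcases hch l hlF Y hYF hfe.symm with hh | hh
          · exact hh
          · exfalso
            have := Finset.card_le_card hh
            omega
        have hne : l ≠ lG := by
          intro he
          rw [he] at hfe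
          exact hfYlG hfe.symm
        exact hYA (htwo Y hYF hYc l lG hlF hlGF hlc hlGc hlA hlGA hne hsubl hsubY)
      have hcover : f Y = f l₁ ∨ f Y = f l₂ ∨ f Y = f l₃ := by
        clear * - hfY4 hfYA hfl1 hfl2 hfl3 hfA hc12 hc13 hc23 hcA1 hcA2 hcA3
        omega
      rcases hcover with h | h | h
      · exact hbr l₁ hl₁F hl₁c hl₁A h
      · exact hbr l₂ hl₂F hl₂c hl₂A h
      · exact hbr l₃ hl₃F hl₃c hl₃A h
    -- smaller fiber elements are below lG
    have hsmall : ∀ B ∈ F, f B = f lG → B.card ≤ 2 → B ⊆ lG := by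
      intro B hBF hBf hBc
      rcases hch B hBF lG hlGF hBf with hh | hh
      · exact hh
      · have : lG = B := Finset.eq_of_subset_of_card_le hh (by omega)
        rw [← this]
    have hVgen : ∀ q : ℕ, q ∈ Finset.Icc 1 n → q ∉ lG →
        (∀ B ∈ F, f B = f lG → B ⊆ insert q lG ∨ insert q lG ⊆ B) →
        insert q lG = A' := by
      intro q hqI hqlG hcomp
      have hVF : insert q lG ∈ F := by
        apply hsand
        · intro x hx
          rcases Finset.mem_insert.mp hx with rfl | hx
          · exact hqI
          · exact hsub lG hlGF hx
        · exact ⟨f lG, hflt lG hlGF, hcomp⟩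
      have hVL3 : insert q lG ∈ L3 := by
        refine (hL3mem _).mpr ⟨hVF, ?_⟩
        rw [Finset.card_insert_of_notMem hqlG, hlGc]
      by_contra hne
      exact hYnotsup _ hVL3 hne (Finset.subset_insert q lG)
    by_cases hEx : ∃ B ∈ F, f B = f lG ∧ 3 ≤ B.card
    · obtain ⟨B₀, hB₀F, hB₀f, hB₀c⟩ := hEx
      set TT := F.filter (fun B => f B = f lG ∧ 3 ≤ B.card) with hTTdef
      have hTTne : TT.Nonempty := ⟨B₀, Finset.mem_filter.mpr ⟨hB₀F, hB₀f, hB₀c⟩⟩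
      obtain ⟨Q, hQTT, hQmin⟩ : ∃ Q ∈ TT, ∀ x ∈ TT, ¬ x < Q := by
        obtain ⟨Q, hQ⟩ := TT.exists_minimal hTTne
        exact ⟨Q, hQ.1, fun x hx hlt => lt_irrefl _ (lt_of_lt_of_le hlt (hQ.2 hx hlt.le))⟩
      have hQF : Q ∈ F := (Finset.mem_filter.mp hQTT).1
      have hQf : f Q = f lG := (Finset.mem_filter.mp hQTT).2.1
      have hQc3 : 3 ≤ Q.card := (Finset.mem_filter.mp hQTT).2.2
      have hQmin' : ∀ B ∈ F, f B = f lG → 3 ≤ B.card → Q ⊆ B := by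
        intro B hBF hBf hBc
        rcases hch Q hQF B hBF (by rw [hQf, hBf]) with hh | hh
        · exact hh
        · rcases eq_or_ne B Q with rfl | hne
          · exact Finset.Subset.refl _
          · exact absurd (Finset.ssubset_iff_subset_ne.mpr ⟨hh, hne⟩)
              (hQmin B (Finset.mem_filter.mpr ⟨hBF, hBf, hBc⟩))
      have hlGQ : lG ⊆ Q := by
        rcases hch lG hlGF Q hQF (by rw [hQf]) with hh | hh
        · exact hh
        · exfalso
          have := Finset.card_le_card hh
          omega
      have hQ4 : 4 ≤ Q.card := by
        by_contra hlt
        have hQ3 : Q.card = 3 := by omega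
        have hQL3 : Q ∈ L3 := (hL3mem Q).mpr ⟨hQF, hQ3⟩
        have hQA : Q ≠ A' := by
          intro he
          rw [he] at hQf
          exact hlGfA hQf.symm
        exact hYnotsup Q hQL3 hQA hlGQ
      have hsd : 1 < (Q \ lG).card := by
        rw [Finset.card_sdiff_of_subset hlGQ]
        omega
      obtain ⟨q₁, hq₁, q₂, hq₂, hqne⟩ := Finset.one_lt_card.mp hsd
      have hVA : ∀ q ∈ Q \ lG, insert q lG = A' := by
        intro q hq
        have hqQ := (Finset.mem_sdiff.mp hq).1
        have hqlG := (Finset.mem_sdiff.mp hq).2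
        apply hVgen q (hsub Q hQF hqQ) hqlG
        intro B hBF hBf
        by_cases hB3 : 3 ≤ B.card
        · right
          exact Finset.insert_subset (hQmin' B hBF hBf hB3 hqQ)
            (hlGQ.trans (hQmin' B hBF hBf hB3))
        · left
          exact (hsmall B hBF hBf (by omega)).trans (Finset.subset_insert _ _)
      have h1 := hVA q₁ hq₁
      have h2 := hVA q₂ hq₂
      have : q₁ ∈ insert q₂ lG := by
        rw [h2, ← h1]
        exact Finset.mem_insert_self _ _
      rcases Finset.mem_insert.mp this with he | he
      · exact hqne he
      · exact (Finset.mem_sdiff.mp hq₁).2 he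
    · push_neg at hEx
      have hsd : 1 < ((Finset.Icc 1 n) \ lG).card := by
        rw [Finset.card_sdiff_of_subset (hsub lG hlGF), Nat.card_Icc]
        omega
      obtain ⟨q₁, hq₁, q₂, hq₂, hqne⟩ := Finset.one_lt_card.mp hsd
      have hVA : ∀ q ∈ (Finset.Icc 1 n) \ lG, insert q lG = A' := by
        intro q hq
        have hqI := (Finset.mem_sdiff.mp hq).1
        have hqlG := (Finset.mem_sdiff.mp hq).2
        apply hVgen q hqI hqlG
        intro B hBF hBf
        left
        have := hEx B hBF hBf
        exact (hsmall B hBF hBf (by omega)).trans (Finset.subset_insert _ _)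
      have h1 := hVA q₁ hq₁
      have h2 := hVA q₂ hq₂
      have : q₁ ∈ insert q₂ lG := by
        rw [h2, ← h1]
        exact Finset.mem_insert_self _ _
      rcases Finset.mem_insert.mp this with he | he
      · exact hqne he
      · exact (Finset.mem_sdiff.mp hq₁).2 he
  rcases hexG with ⟨h1, h2⟩ | ⟨h1, h2⟩ | ⟨h1, h2⟩
  · exact main l₁ hl₁F hl₁c hl₁A hcA1 h1 h2
  · exact main l₂ hl₂F hl₂c hl₂A hcA2 h1 h2
  · exact main l₃ hl₃F hl₃c hl₃A hcA3 h1 h2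
end Kill

set_option maxHeartbeats 2000000 in
/-- For `n ≥ 5` and `F` a 5-antichain saturated family of subsets of `[n]`, it is not the
case that every level `1 ≤ i ≤ n - 1` of `F` has exactly three sets. -/
theorem five_saturated_not_all_levels_three (n : ℕ) (hn : 5 ≤ n) (F : Finset (Finset ℕ))
    (hF : IsAntichainSaturated n 5 F) :
    ¬ ∀ i, 1 ≤ i → i ≤ n - 1 → (F.filter fun A => A.card = i).card = 3 := by
  classical
  intro hlev
  obtain ⟨hsub, hno5, hsat⟩ := hF
  have hno5' : ¬ ∃ S ⊆ F, S.card = 5 ∧ IsAC S := hno5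
  -- Dilworth: 4-coloring of F into chains
  obtain ⟨f, hflt, hch⟩ := dilworth 4 F hno5'
  -- witness antichains
  have hwit : ∀ X : Finset ℕ, X ⊆ Finset.Icc 1 n → X ∉ F →
      ∃ W : Finset (Finset ℕ), W ⊆ F ∧ W.card = 4 ∧ IsAC W ∧
        (∀ B ∈ W, ¬ B ⊆ X ∧ ¬ X ⊆ B) ∧ (∀ i, i < 4 → ∃ B ∈ W, f B = i) := by
    intro X hXI hXF
    obtain ⟨S, hSsub, hSc, hSac⟩ := hsat X hXI hXF
    have hXS : X ∈ S := by
      by_contra hXS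
      refine hno5 ⟨S, ?_, hSc, hSac⟩
      intro B hB
      rcases Finset.mem_insert.mp (hSsub hB) with rfl | h
      · exact absurd hB hXS
      · exact h
    set W := S.erase X with hWdef
    have hWF : W ⊆ F := by
      intro B hB
      have hBX := Finset.ne_of_mem_erase hB
      rcases Finset.mem_insert.mp (hSsub (Finset.mem_of_mem_erase hB)) with h | h
      · exact absurd h hBX
      · exact h
    have hWc : W.card = 4 := by
      rw [hWdef, Finset.card_erase_of_mem hXS, hSc]
    have hWac : IsAC W := by
      intro B hB C hC hne
      exact hSac B (Finset.mem_of_mem_erase hB) C (Finset.mem_of_mem_erase hC) hne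
    refine ⟨W, hWF, hWc, hWac, ?_, ?_⟩
    · intro B hB
      have hBX := Finset.ne_of_mem_erase hB
      have hBS := Finset.mem_of_mem_erase hB
      exact ⟨hSac B hBS X hXS hBX, hSac X hXS B hBS (Ne.symm hBX)⟩
    · exact chain_transversal f 4 F W hWF hWc hWac hflt hch
  -- the sandwich principle
  have hsand : ∀ X : Finset ℕ, X ⊆ Finset.Icc 1 n →
      (∃ i, i < 4 ∧ ∀ B ∈ F, f B = i → B ⊆ X ∨ X ⊆ B) → X ∈ F := by
    intro X hXI ⟨i, hi, hcomp⟩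
    by_contra hXF
    obtain ⟨W, hWF, _, _, hWperp, hWtr⟩ := hwit X hXI hXF
    obtain ⟨B, hBW, hBf⟩ := hWtr i hi
    rcases hcomp B (hWF hBW) hBf with h | h
    · exact (hWperp B hBW).1 h
    · exact (hWperp B hBW).2 h
  -- levels
  have hLv1 : (F.filter fun A => A.card = 1).card = 3 := hlev 1 (by norm_num) (by omega)
  have hLv2 : (F.filter fun A => A.card = 2).card = 3 := hlev 2 (by norm_num) (by omega)
  have hLv3 : (F.filter fun A => A.card = 3).card = 3 := hlev 3 (by norm_num) (by omega)
  -- extract the three singletons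
  obtain ⟨u₁, u₂, u₃, hu12, hu13, hu23, hL1⟩ := Finset.card_eq_three.mp hLv1
  have hu₁ : u₁ ∈ F.filter (fun A => A.card = 1) := by rw [hL1]; simp
  have hu₂ : u₂ ∈ F.filter (fun A => A.card = 1) := by rw [hL1]; simp
  have hu₃ : u₃ ∈ F.filter (fun A => A.card = 1) := by rw [hL1]; simp
  obtain ⟨a, rfl⟩ := Finset.card_eq_one.mp (Finset.mem_filter.mp hu₁).2
  obtain ⟨b, rfl⟩ := Finset.card_eq_one.mp (Finset.mem_filter.mp hu₂).2
  obtain ⟨c, rfl⟩ := Finset.card_eq_one.mp (Finset.mem_filter.mp hu₃).2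
  have haF : ({a} : Finset ℕ) ∈ F := (Finset.mem_filter.mp hu₁).1
  have hbF : ({b} : Finset ℕ) ∈ F := (Finset.mem_filter.mp hu₂).1
  have hcF : ({c} : Finset ℕ) ∈ F := (Finset.mem_filter.mp hu₃).1
  have hab : a ≠ b := fun h => hu12 (by rw [h])
  have hac : a ≠ c := fun h => hu13 (by rw [h])
  have hbc : b ≠ c := fun h => hu23 (by rw [h])
  have haI : a ∈ Finset.Icc 1 n := hsub _ haF (Finset.mem_singleton_self a)
  have hbI : b ∈ Finset.Icc 1 n := hsub _ hbF (Finset.mem_singleton_self b)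
  have hcI : c ∈ Finset.Icc 1 n := hsub _ hcF (Finset.mem_singleton_self c)
  have hsing : ∀ B ∈ F, B.card = 1 → B = {a} ∨ B = {b} ∨ B = {c} := by
    intro B hBF hBc
    have : B ∈ F.filter (fun A => A.card = 1) := Finset.mem_filter.mpr ⟨hBF, hBc⟩
    rw [hL1] at this
    simpa using this
  have habc : ({a, b, c} : Finset ℕ).card = 3 := by
    rw [Finset.card_insert_of_notMem (by simp [hab, hac]),
      Finset.card_insert_of_notMem (by simp [hbc]), Finset.card_singleton]
  have habcI : ({a, b, c} : Finset ℕ) ⊆ Finset.Icc 1 n := by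
    intro x hx
    rcases Finset.mem_insert.mp hx with rfl | hx
    · exact haI
    rcases Finset.mem_insert.mp hx with rfl | hx
    · exact hbI
    · rw [Finset.mem_singleton.mp hx]; exact hcI
  -- color distinctness tool
  have hcolne : ∀ s t : Finset ℕ, s ∈ F → t ∈ F → s.card = t.card → s ≠ t → f s ≠ f t := by
    intro s t hsF htF hcard hne he
    rcases hch s hsF t htF he with h | h
    · exact hne (Finset.eq_of_subset_of_card_le h (by omega))
    · exact hne (Finset.eq_of_subset_of_card_le h (by omega)).symm
  have hfab : f {a} ≠ f {b} := hcolne _ _ haF hbF rfl (by simpa using hab)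
  have hfac : f {a} ≠ f {c} := hcolne _ _ haF hcF rfl (by simpa using hac)
  have hfbc : f {b} ≠ f {c} := hcolne _ _ hbF hcF rfl (by simpa using hbc)
  have hfa4 : f {a} < 4 := hflt _ haF
  have hfb4 : f {b} < 4 := hflt _ hbF
  have hfc4 : f {c} < 4 := hflt _ hcF
  set c4 : ℕ := 6 - (f {a} + f {b} + f {c}) with hc4def
  have hc4 : c4 < 4 ∧ c4 ≠ f {a} ∧ c4 ≠ f {b} ∧ c4 ≠ f {c} := by
    clear * - hfab hfac hfbc hfa4 hfb4 hfc4 hc4def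
    omega
  have hcover4 : ∀ j, j < 4 → j = f {a} ∨ j = f {b} ∨ j = f {c} ∨ j = c4 := by
    clear * - hfab hfac hfbc hfa4 hfb4 hfc4 hc4def
    omega
  -- an element outside {a,b,c}
  have hdex : ∃ d, d ∈ Finset.Icc 1 n ∧ d ∉ ({a, b, c} : Finset ℕ) := by
    have hcard : 0 < (Finset.Icc 1 n \ ({a, b, c} : Finset ℕ)).card := by
      rw [Finset.card_sdiff_of_subset habcI, Nat.card_Icc, habc]
      omega
    obtain ⟨d, hd⟩ := Finset.card_pos.mp hcard
    exact ⟨d, (Finset.mem_sdiff.mp hd).1, (Finset.mem_sdiff.mp hd).2⟩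
  obtain ⟨d, hdI, hdabc⟩ := hdex
  have hsing_out : ∀ x : ℕ, x ∉ ({a, b, c} : Finset ℕ) → ({x} : Finset ℕ) ∉ F := by
    intro x hx hxF
    rcases hsing _ hxF (Finset.card_singleton x) with h | h | h <;>
      rw [Finset.singleton_inj] at h <;> subst h <;> simp at hx
  -- minimal nonempty elements of every fiber
  have hMex : ∀ i, i < 4 → ∃ M : Finset ℕ, (M ∈ F ∧ f M = i ∧ M.Nonempty ∧ M ⊆ {a, b, c}) ∧
      (∀ B ∈ F, f B = i → B.Nonempty → M ⊆ B) := by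
    intro i hi
    obtain ⟨W, hWF, _, _, hWperp, hWtr⟩ := hwit {d} (by simpa using hdI) (hsing_out d hdabc)
    obtain ⟨Bd, hBdW, hBdf⟩ := hWtr i hi
    have hBdne : Bd.Nonempty := by
      rcases Bd.eq_empty_or_nonempty with rfl | h
      · exact absurd (Finset.empty_subset _) (hWperp _ hBdW).1
      · exact h
    set TT := F.filter (fun B => f B = i ∧ B.Nonempty) with hTTdef
    have hTTne : TT.Nonempty := ⟨Bd, Finset.mem_filter.mpr ⟨hWF hBdW, hBdf, hBdne⟩⟩
    obtain ⟨M, hMTT, hMmin⟩ : ∃ M ∈ TT, ∀ x ∈ TT, ¬ x < M := by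
      obtain ⟨M, hM⟩ := TT.exists_minimal hTTne
      exact ⟨M, hM.1, fun x hx hlt => lt_irrefl _ (lt_of_lt_of_le hlt (hM.2 hx hlt.le))⟩
    have hMF : M ∈ F := (Finset.mem_filter.mp hMTT).1
    have hMf : f M = i := (Finset.mem_filter.mp hMTT).2.1
    have hMne : M.Nonempty := (Finset.mem_filter.mp hMTT).2.2
    have hMmin' : ∀ B ∈ F, f B = i → B.Nonempty → M ⊆ B := by
      intro B hBF hBf hBne
      rcases hch M hMF B hBF (by rw [hMf, hBf]) with h | h
      · exact h
      · rcases eq_or_ne B M with rfl | hne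
        · exact Finset.Subset.refl _
        · exact absurd (Finset.ssubset_iff_subset_ne.mpr ⟨h, hne⟩)
            (hMmin B (Finset.mem_filter.mpr ⟨hBF, hBf, hBne⟩))
    refine ⟨M, ⟨hMF, hMf, hMne, ?_⟩, hMmin'⟩
    intro x hxM
    by_contra hxabc
    have hxI : x ∈ Finset.Icc 1 n := hsub M hMF hxM
    obtain ⟨W', hW'F, _, _, hW'perp, hW'tr⟩ := hwit {x} (by simpa using hxI) (hsing_out x hxabc)
    obtain ⟨B', hB'W, hB'f⟩ := hW'tr i hi
    have hB'ne : B'.Nonempty := by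
      rcases B'.eq_empty_or_nonempty with rfl | h
      · exact absurd (Finset.empty_subset _) (hW'perp _ hB'W).1
      · exact h
    have hxB' : x ∉ B' := by
      intro hx
      exact (hW'perp _ hB'W).2 (Finset.singleton_subset_iff.mpr hx)
    exact hxB' (hMmin' B' (hW'F hB'W) hB'f hB'ne hxM)
  choose MM hMM hMMmin using hMex
  -- the singleton {s} is the minimum of its fiber
  have KF1 : ∀ s : ℕ, ({s} : Finset ℕ) ∈ F → ∀ (hi : f {s} < 4), MM (f {s}) hi = {s} := by
    intro s hsF hi
    have h1 := hMMmin (f {s}) hi _ hsF rfl (Finset.singleton_nonempty s)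
    have h2 := (hMM (f {s}) hi).2.2.1
    exact Finset.Nonempty.subset_singleton_iff h2 |>.mp h1 |>.symm ▸ rfl
  have KF1' : ∀ s : ℕ, ({s} : Finset ℕ) ∈ F → ∀ i, ∀ (hi : i < 4), f {s} = i →
      MM i hi = {s} := by
    intro s hsF i hi hfi
    cases hfi
    exact KF1 s hsF hi
  -- the bottom of the fourth chain
  have hc4lt : c4 < 4 := hc4.1
  have hPF : MM c4 hc4lt ∈ F := (hMM c4 hc4lt).1
  have hPf : f (MM c4 hc4lt) = c4 := (hMM c4 hc4lt).2.1
  have hPne : (MM c4 hc4lt).Nonempty := (hMM c4 hc4lt).2.2.1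
  have hPA : MM c4 hc4lt ⊆ {a, b, c} := (hMM c4 hc4lt).2.2.2
  have hPmin : ∀ B ∈ F, f B = c4 → B.Nonempty → MM c4 hc4lt ⊆ B := hMMmin c4 hc4lt
  set P := MM c4 hc4lt with hPdef
  clear_value P
  have hPcard : P.card = 2 ∨ P.card = 3 := by
    have hle : P.card ≤ 3 := by
      have := Finset.card_le_card hPA
      omega
    have hge : 1 ≤ P.card := Finset.card_pos.mpr hPne
    have hne1 : P.card ≠ 1 := by
      intro h1
      obtain ⟨x, rfl⟩ := Finset.card_eq_one.mp h1
      have hx : x ∈ ({a, b, c} : Finset ℕ) := hPA (Finset.mem_singleton_self x)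
      have : f ({x} : Finset ℕ) = c4 := hPf
      rcases Finset.mem_insert.mp hx with rfl | hx
      · exact hc4.2.1 this.symm
      rcases Finset.mem_insert.mp hx with rfl | hx
      · exact hc4.2.2.1 this.symm
      · rw [Finset.mem_singleton.mp hx] at this
        exact hc4.2.2.2 this.symm
    omega
  -- pair tool in the P.card = 3 case and general sandwich for 2-subsets of P
  rcases hPcard with hP2 | hP3
  case inr =>
    -- P = {a,b,c}
    have hPeq : P = ({a, b, c} : Finset ℕ) := by
      apply Finset.eq_of_subset_of_card_le hPA
      omega
    have hpair : ∀ V : Finset ℕ, V ⊆ P → V.card = 2 → V ∈ F := by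
      intro V hVP hVc
      apply hsand V (hVP.trans (hsub P hPF))
      refine ⟨c4, hc4lt, ?_⟩
      intro B hBF hBf
      rcases B.eq_empty_or_nonempty with rfl | hBne
      · left; exact Finset.empty_subset _
      · right; exact hVP.trans (hPmin B hBF hBf hBne)
    have hsubab : ({a, b} : Finset ℕ) ⊆ P := by
      rw [hPeq]; intro x hx
      rcases Finset.mem_insert.mp hx with rfl | hx
      · simp
      · rw [Finset.mem_singleton.mp hx]; simp
    have hsubac : ({a, c} : Finset ℕ) ⊆ P := by
      rw [hPeq]; intro x hx
      rcases Finset.mem_insert.mp hx with rfl | hx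
      · simp
      · rw [Finset.mem_singleton.mp hx]; simp
    have hsubbc : ({b, c} : Finset ℕ) ⊆ P := by
      rw [hPeq]; intro x hx
      rcases Finset.mem_insert.mp hx with rfl | hx
      · simp
      · rw [Finset.mem_singleton.mp hx]; simp
    have hcab : ({a, b} : Finset ℕ).card = 2 := by
      rw [Finset.card_insert_of_notMem (by simp [hab]), Finset.card_singleton]
    have hcac : ({a, c} : Finset ℕ).card = 2 := by
      rw [Finset.card_insert_of_notMem (by simp [hac]), Finset.card_singleton]
    have hcbc : ({b, c} : Finset ℕ).card = 2 := by
      rw [Finset.card_insert_of_notMem (by simp [hbc]), Finset.card_singleton]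
    have habF : ({a, b} : Finset ℕ) ∈ F := hpair _ hsubab hcab
    have hacF : ({a, c} : Finset ℕ) ∈ F := hpair _ hsubac hcac
    have hbcF : ({b, c} : Finset ℕ) ∈ F := hpair _ hsubbc hcbc
    have hne_ab_ac : ({a, b} : Finset ℕ) ≠ {a, c} := by
      intro h
      have : c ∈ ({a, b} : Finset ℕ) := by rw [h]; simp
      rcases Finset.mem_insert.mp this with h' | h'
      · exact hac h'.symm
      · exact hbc (Finset.mem_singleton.mp h').symm
    have hne_ab_bc : ({a, b} : Finset ℕ) ≠ {b, c} := by
      intro h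
      have : c ∈ ({a, b} : Finset ℕ) := by rw [h]; simp
      rcases Finset.mem_insert.mp this with h' | h'
      · exact hac h'.symm
      · exact hbc (Finset.mem_singleton.mp h').symm
    have hne_ac_bc : ({a, c} : Finset ℕ) ≠ {b, c} := by
      intro h
      have : b ∈ ({a, c} : Finset ℕ) := by rw [h]; simp
      rcases Finset.mem_insert.mp this with h' | h'
      · exact hab h'.symm
      · exact hbc (Finset.mem_singleton.mp h')
    have hnotc4 : ∀ V : Finset ℕ, V ∈ F → V.card = 2 → f V ≠ c4 := by
      intro V hVF hVc h
      have := Finset.card_le_card (hPmin V hVF h (Finset.card_pos.mp (by omega)))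
      omega
    exact kill3 n F f hn hsub hflt hch hsand hLv3 P hPF (by omega)
      {a, b} {a, c} {b, c} habF hacF hbcF hcab hcac hcbc hsubab hsubac hsubbc
      (hcolne _ _ habF hacF (by rw [hcab, hcac]) hne_ab_ac)
      (hcolne _ _ habF hbcF (by rw [hcab, hcbc]) hne_ab_bc)
      (hcolne _ _ hacF hbcF (by rw [hcac, hcbc]) hne_ac_bc)
      (by rw [hPf]; exact hnotc4 _ habF hcab)
      (by rw [hPf]; exact hnotc4 _ hacF hcac)
      (by rw [hPf]; exact hnotc4 _ hbcF hcbc)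
  case inl =>
    -- P.card = 2 : the long case
    set L2 := F.filter (fun A => A.card = 2) with hL2def
    clear_value L2
    have hL2mem : ∀ B : Finset ℕ, B ∈ L2 ↔ (B ∈ F ∧ B.card = 2) := by
      intro B
      rw [hL2def]
      exact Finset.mem_filter
    have hL2card : L2.card = 3 := hLv2
    have hPL2 : P ∈ L2 := (hL2mem P).mpr ⟨hPF, hP2⟩
    have hRcard : (L2.erase P).card = 2 := by
      rw [Finset.card_erase_of_mem hPL2, hL2card]
    obtain ⟨R₁, R₂, hR12, hRe⟩ := Finset.card_eq_two.mp hRcard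
    have hR₁e : R₁ ∈ L2.erase P := by rw [hRe]; simp
    have hR₂e : R₂ ∈ L2.erase P := by rw [hRe]; simp
    have hR₁L2 : R₁ ∈ L2 := Finset.mem_of_mem_erase hR₁e
    have hR₂L2 : R₂ ∈ L2 := Finset.mem_of_mem_erase hR₂e
    have hR₁P : R₁ ≠ P := Finset.ne_of_mem_erase hR₁e
    have hR₂P : R₂ ≠ P := Finset.ne_of_mem_erase hR₂e
    have hR₁F : R₁ ∈ F := ((hL2mem R₁).mp hR₁L2).1
    have hR₂F : R₂ ∈ F := ((hL2mem R₂).mp hR₂L2).1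
    have hR₁c : R₁.card = 2 := ((hL2mem R₁).mp hR₁L2).2
    have hR₂c : R₂.card = 2 := ((hL2mem R₂).mp hR₂L2).2
    have hL2eq : ∀ B ∈ L2, B = P ∨ B = R₁ ∨ B = R₂ := by
      intro B hB
      by_contra hcon
      push_neg at hcon
      have hBe : B ∈ L2.erase P := Finset.mem_erase.mpr ⟨hcon.1, hB⟩
      rw [hRe] at hBe
      rcases Finset.mem_insert.mp hBe with h | h
      · exact hcon.2.1 h
      · exact hcon.2.2 (Finset.mem_singleton.mp h)
    have hfR₁P : f R₁ ≠ f P := hcolne _ _ hR₁F hPF (by omega) hR₁P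
    have hfR₂P : f R₂ ≠ f P := hcolne _ _ hR₂F hPF (by omega) hR₂P
    have hfR₁R₂ : f R₁ ≠ f R₂ := hcolne _ _ hR₁F hR₂F (by omega) hR12
    have hfR₁4 : f R₁ < 4 := hflt _ hR₁F
    have hfR₂4 : f R₂ < 4 := hflt _ hR₂F
    -- the missing color at level 2
    set m : ℕ := 6 - (f P + f R₁ + f R₂) with hmdef
    have hfP4 : f P < 4 := hflt _ hPF
    have hm : m < 4 ∧ m ≠ f P ∧ m ≠ f R₁ ∧ m ≠ f R₂ := by
      clear * - hfR₁P hfR₂P hfR₁R₂ hfR₁4 hfR₂4 hfP4 hmdef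
      omega
    -- m is a singleton color; find σ
    have hσex : ∃ σ : ℕ, σ ∈ ({a, b, c} : Finset ℕ) ∧ ({σ} : Finset ℕ) ∈ F ∧ f {σ} = m := by
      have hmc4 : m ≠ c4 := by rw [← hPf]; exact hm.2.1
      rcases hcover4 m hm.1 with h | h | h | h
      · exact ⟨a, by simp, haF, h.symm⟩
      · exact ⟨b, by simp, hbF, h.symm⟩
      · exact ⟨c, by simp, hcF, h.symm⟩
      · exact absurd h hmc4
    obtain ⟨σ, hσabc, hσF, hσf⟩ := hσex
    have hσI : σ ∈ Finset.Icc 1 n := habcI hσabc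
    -- minimum of fiber m is {σ}
    have hMm : ∀ B ∈ F, f B = m → B.Nonempty → ({σ} : Finset ℕ) ⊆ B := by
      intro B hBF hBf hBne
      have := KF1 σ hσF (hσf ▸ hm.1)
      have h2 := hMMmin (f {σ}) (hσf ▸ hm.1) B hBF (by rw [hσf, hBf]) hBne
      rwa [this] at h2
    -- small members of fiber m are ⊆ {σ}
    have hsmallm : (∀ B ∈ F, f B = m → B.card ≤ 1) →
        ∀ B ∈ F, f B = m → B ⊆ {σ} := by
      intro hsm B hBF hBf
      rcases B.eq_empty_or_nonempty with rfl | hBne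
      · exact Finset.empty_subset _
      · have h1 := hMm B hBF hBf hBne
        have h2 := hsm B hBF hBf
        have : ({σ} : Finset ℕ) = B :=
          Finset.eq_of_subset_of_card_le h1 (by simpa using h2)
        rw [← this]
    by_cases hQex : ∃ B ∈ F, f B = m ∧ 2 ≤ B.card
    case neg =>
      -- no big sets in fiber m : too many level-2 sets
      push_neg at hQex
      have hsm : ∀ B ∈ F, f B = m → B.card ≤ 1 := by
        intro B hBF hBf
        have := hQex B hBF hBf
        omega
      have hVmem : ∀ q ∈ (Finset.Icc 1 n).erase σ, insert q {σ} ∈ L2 := by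
        intro q hq
        have hqI := Finset.mem_of_mem_erase hq
        have hqσ := Finset.ne_of_mem_erase hq
        have hVF : insert q {σ} ∈ F := by
          apply hsand
          · intro x hx
            rcases Finset.mem_insert.mp hx with rfl | hx
            · exact hqI
            · rw [Finset.mem_singleton.mp hx]; exact hσI
          · refine ⟨m, hm.1, ?_⟩
            intro B hBF hBf
            left
            exact (hsmallm hsm B hBF hBf).trans (Finset.subset_insert _ _)
        refine (hL2mem _).mpr ⟨hVF, ?_⟩
        rw [Finset.card_insert_of_notMem (by simp [hqσ]), Finset.card_singleton]
      have hinj : Set.InjOn (fun q => insert q ({σ} : Finset ℕ))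
          ((Finset.Icc 1 n).erase σ) := by
        intro q₁ h₁ q₂ h₂ he
        simp only at he
        have : q₁ ∈ insert q₂ ({σ} : Finset ℕ) := by
          rw [← he]; exact Finset.mem_insert_self _ _
        rcases Finset.mem_insert.mp this with h | h
        · exact h
        · exact absurd (Finset.mem_singleton.mp h)
            (Finset.ne_of_mem_erase (Finset.mem_coe.mp h₁))
      have hle := Finset.card_le_card_of_injOn _ hVmem hinj
      rw [Finset.card_erase_of_mem hσI, Nat.card_Icc, hL2card] at hle
      omega
    case pos =>
      obtain ⟨B₀, hB₀F, hB₀f, hB₀c⟩ := hQex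
      set TT := F.filter (fun B => f B = m ∧ 2 ≤ B.card) with hTTdef
      clear_value TT
      have hTTmem : ∀ B : Finset ℕ, B ∈ TT ↔ (B ∈ F ∧ f B = m ∧ 2 ≤ B.card) := by
        intro B
        rw [hTTdef]
        exact Finset.mem_filter
      have hTTne : TT.Nonempty := ⟨B₀, (hTTmem _).mpr ⟨hB₀F, hB₀f, hB₀c⟩⟩
      obtain ⟨Q, hQTT, hQmin⟩ : ∃ Q ∈ TT, ∀ x ∈ TT, ¬ x < Q := by
        obtain ⟨Q, hQ⟩ := TT.exists_minimal hTTne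
        exact ⟨Q, hQ.1, fun x hx hlt => lt_irrefl _ (lt_of_lt_of_le hlt (hQ.2 hx hlt.le))⟩
      have hQF : Q ∈ F := ((hTTmem Q).mp hQTT).1
      have hQf : f Q = m := ((hTTmem Q).mp hQTT).2.1
      have hQ2 : 2 ≤ Q.card := ((hTTmem Q).mp hQTT).2.2
      have hQmin' : ∀ B ∈ F, f B = m → 2 ≤ B.card → Q ⊆ B := by
        intro B hBF hBf hBc
        rcases hch Q hQF B hBF (by rw [hQf, hBf]) with h | h
        · exact h
        · rcases eq_or_ne B Q with rfl | hne
          · exact Finset.Subset.refl _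
          · exact absurd (Finset.ssubset_iff_subset_ne.mpr ⟨h, hne⟩)
              (hQmin B ((hTTmem _).mpr ⟨hBF, hBf, hBc⟩))
      have hσQ : σ ∈ Q :=
        Finset.singleton_subset_iff.mp (hMm Q hQF hQf (Finset.card_pos.mp (by omega)))
      have hsmall2 : ∀ B ∈ F, f B = m → ¬ 2 ≤ B.card → B ⊆ {σ} := by
        intro B hBF hBf hBc
        rcases B.eq_empty_or_nonempty with rfl | hBne
        · exact Finset.empty_subset _
        · have h1 := hMm B hBF hBf hBne
          have : ({σ} : Finset ℕ) = B :=
            Finset.eq_of_subset_of_card_le h1 (by simp; omega)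
          rw [← this]
      have hQ3 : 3 ≤ Q.card := by
        rcases Nat.lt_or_ge Q.card 3 with h | h
        · exfalso
          have hQ2' : Q.card = 2 := by omega
          have hQL2 : Q ∈ L2 := (hL2mem Q).mpr ⟨hQF, hQ2'⟩
          rcases hL2eq Q hQL2 with rfl | rfl | rfl
          · exact hm.2.1 hQf.symm
          · exact hm.2.2.1 hQf.symm
          · exact hm.2.2.2 hQf.symm
        · exact h
      have hVmem : ∀ q ∈ Q.erase σ, insert q {σ} ∈ L2 := by
        intro q hq
        have hqQ := Finset.mem_of_mem_erase hq
        have hqσ := Finset.ne_of_mem_erase hq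
        have hVF : insert q {σ} ∈ F := by
          apply hsand
          · intro x hx
            rcases Finset.mem_insert.mp hx with rfl | hx
            · exact hsub Q hQF hqQ
            · rw [Finset.mem_singleton.mp hx]; exact hσI
          · refine ⟨m, hm.1, ?_⟩
            intro B hBF hBf
            by_cases hB2 : 2 ≤ B.card
            · right
              refine Finset.insert_subset (hQmin' B hBF hBf hB2 hqQ) ?_
              intro z hz
              rw [Finset.mem_singleton.mp hz]
              exact hQmin' B hBF hBf hB2 hσQ
            · left
              exact (hsmall2 B hBF hBf hB2).trans (Finset.subset_insert _ _)
        refine (hL2mem _).mpr ⟨hVF, ?_⟩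
        rw [Finset.card_insert_of_notMem (by simp [hqσ]), Finset.card_singleton]
      -- if insert q {σ} is one of the R's, then q ∈ {a,b,c}
      have hRcase : ∀ R : Finset ℕ, R ∈ F → f R ≠ m → ∀ q, insert q ({σ} : Finset ℕ) = R →
          q ∈ ({a, b, c} : Finset ℕ) := by
        intro R hRF hRm q hV
        have hfR4 : f R < 4 := hflt _ hRF
        have hMsub : MM (f R) hfR4 ⊆ R := hMMmin (f R) hfR4 R hRF rfl
          ⟨q, by rw [← hV]; exact Finset.mem_insert_self _ _⟩
        by_cases hqM : q ∈ MM (f R) hfR4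
        · exact (hMM (f R) hfR4).2.2.2 hqM
        · exfalso
          have hsubσ : MM (f R) hfR4 ⊆ {σ} := by
            intro x hx
            have hxR : x ∈ R := hMsub hx
            rw [← hV] at hxR
            rcases Finset.mem_insert.mp hxR with rfl | h
            · exact absurd hx hqM
            · exact h
          have heq : MM (f R) hfR4 = {σ} :=
            Finset.Nonempty.subset_singleton_iff (hMM (f R) hfR4).2.2.1 |>.mp hsubσ
          have : f ({σ} : Finset ℕ) = f R := by
            rw [← heq]
            exact (hMM (f R) hfR4).2.1
          rw [hσf] at this
          exact hRm this.symm
      -- every q ∈ Q.erase σ lies in {a,b,c}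
      have hqabc : ∀ q ∈ Q.erase σ, q ∈ ({a, b, c} : Finset ℕ) := by
        intro q hq
        have hVL2 := hVmem q hq
        have hqV : q ∈ insert q ({σ} : Finset ℕ) := by simp
        rcases hL2eq _ hVL2 with hVP | hVR | hVR
        · rw [hVP] at hqV
          exact hPA hqV
        · exact hRcase R₁ hR₁F (fun h => hm.2.2.1 h.symm) q hVR
        · exact hRcase R₂ hR₂F (fun h => hm.2.2.2 h.symm) q hVR
      -- Q = {a,b,c}
      have hQabc : Q ⊆ ({a, b, c} : Finset ℕ) := by
        intro x hx
        rcases eq_or_ne x σ with rfl | hxσ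
        · exact hσabc
        · exact hqabc x (Finset.mem_erase.mpr ⟨hxσ, hx⟩)
      have hQeq : Q = ({a, b, c} : Finset ℕ) := by
        apply Finset.eq_of_subset_of_card_le hQabc
        omega
      have hQc3 : Q.card = 3 := by rw [hQeq]; exact habc
      -- two distinct elements q₁ q₂ of Q.erase σ, giving V₁ V₂
      have hQec : (Q.erase σ).card = 2 := by
        rw [Finset.card_erase_of_mem hσQ, hQc3]
      obtain ⟨q₁, q₂, hq12, hQee⟩ := Finset.card_eq_two.mp hQec
      have hq₁e : q₁ ∈ Q.erase σ := by rw [hQee]; simp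
      have hq₂e : q₂ ∈ Q.erase σ := by rw [hQee]; simp
      have hq₁σ : q₁ ≠ σ := Finset.ne_of_mem_erase hq₁e
      have hq₂σ : q₂ ≠ σ := Finset.ne_of_mem_erase hq₂e
      have hV₁L2 : insert q₁ {σ} ∈ L2 := hVmem q₁ hq₁e
      have hV₂L2 : insert q₂ {σ} ∈ L2 := hVmem q₂ hq₂e
      have hV12 : insert q₁ ({σ} : Finset ℕ) ≠ insert q₂ ({σ} : Finset ℕ) := by
        intro h
        have : q₁ ∈ insert q₂ ({σ} : Finset ℕ) := by rw [← h]; simp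
        rcases Finset.mem_insert.mp this with h' | h'
        · exact hq12 h'
        · exact hq₁σ (Finset.mem_singleton.mp h')
      have hV₁abc : insert q₁ ({σ} : Finset ℕ) ⊆ ({a, b, c} : Finset ℕ) := by
        intro x hx
        rcases Finset.mem_insert.mp hx with rfl | hx
        · exact hqabc _ hq₁e
        · rw [Finset.mem_singleton.mp hx]; exact hσabc
      have hV₂abc : insert q₂ ({σ} : Finset ℕ) ⊆ ({a, b, c} : Finset ℕ) := by
        intro x hx
        rcases Finset.mem_insert.mp hx with rfl | hx
        · exact hqabc _ hq₂e
        · rw [Finset.mem_singleton.mp hx]; exact hσabc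
      have hamem : ({a, b, c} : Finset ℕ) ∈ F := by rw [← hQeq]; exact hQF
      have hafm : f ({a, b, c} : Finset ℕ) = m := by rw [← hQeq]; exact hQf
      by_cases hall : ∀ T ∈ L2, T ⊆ ({a, b, c} : Finset ℕ)
      case pos =>
        -- all of level 2 inside {a,b,c} : kill at level 3
        have hLv3' : (F.filter fun A => A.card = 3).card = 3 := hLv3
        exact kill3 n F f hn hsub hflt hch hsand hLv3'
          ({a, b, c} : Finset ℕ) hamem habc
          P R₁ R₂ hPF hR₁F hR₂F hP2 hR₁c hR₂c
          (hall P hPL2) (hall R₁ hR₁L2) (hall R₂ hR₂L2)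
          (Ne.symm hfR₁P) (Ne.symm hfR₂P) hfR₁R₂
          (by rw [hafm]; exact fun h => hm.2.1 h.symm)
          (by rw [hafm]; exact fun h => hm.2.2.1 h.symm)
          (by rw [hafm]; exact fun h => hm.2.2.2 h.symm)
      case neg =>
        push_neg at hall
        obtain ⟨T, hTL2, hTnabc⟩ := hall
        have hTF : T ∈ F := ((hL2mem T).mp hTL2).1
        have hTc : T.card = 2 := ((hL2mem T).mp hTL2).2
        have hTP : T ≠ P := by
          intro h
          exact hTnabc (h ▸ hPA)
        have hTV₁ : T ≠ insert q₁ {σ} := fun h => hTnabc (h ▸ hV₁abc)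
        have hTV₂ : T ≠ insert q₂ {σ} := fun h => hTnabc (h ▸ hV₂abc)
        -- T is R₁ or R₂; the other R' equals one of the V's, and P the other
        have hTR : T = R₁ ∨ T = R₂ := by
          rcases hL2eq T hTL2 with h | h | h
          · exact absurd h hTP
          · exact Or.inl h
          · exact Or.inr h
        -- the V's are exactly {P, R'}
        have hendgame : ∀ R' : Finset ℕ, R' ∈ F → R'.card = 2 → R' ≠ P → f R' ≠ m →
            f R' ≠ f P → f T ≠ f R' → f T ≠ m → f T ≠ f P →
            (∀ V : Finset ℕ, V ∈ L2 → V = P ∨ V = T ∨ V = R') → False := by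
          intro R' hR'F hR'c hR'P hR'm hR'fP hTR' hTm hTfP hL2eq'
          -- P and R' are the two V's
          have hv₁ : insert q₁ ({σ} : Finset ℕ) = P ∨ insert q₁ ({σ} : Finset ℕ) = R' := by
            rcases hL2eq' _ hV₁L2 with h | h | h
            · exact Or.inl h
            · exact absurd h.symm hTV₁
            · exact Or.inr h
          have hv₂ : insert q₂ ({σ} : Finset ℕ) = P ∨ insert q₂ ({σ} : Finset ℕ) = R' := by
            rcases hL2eq' _ hV₂L2 with h | h | h
            · exact Or.inl h
            · exact absurd h.symm hTV₂
            · exact Or.inr h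
          -- get: σ ∈ P, σ ∈ R', R' ⊆ abc
          have hkey : σ ∈ P ∧ σ ∈ R' ∧ R' ⊆ ({a, b, c} : Finset ℕ) := by
            rcases hv₁ with h₁ | h₁ <;> rcases hv₂ with h₂ | h₂
            · exact absurd (h₁.trans h₂.symm) hV12
            · refine ⟨by rw [← h₁]; simp, by rw [← h₂]; simp, by rw [← h₂]; exact hV₂abc⟩
            · refine ⟨by rw [← h₂]; simp, by rw [← h₁]; simp, by rw [← h₁]; exact hV₁abc⟩
            · exact absurd (h₁.trans h₂.symm) hV12
          obtain ⟨hσP, hσR', hR'abc⟩ := hkey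
          -- extract the second elements of P and R'
          have hPe1 : (P.erase σ).card = 1 := by
            rw [Finset.card_erase_of_mem hσP, hP2]
          obtain ⟨x, hxe⟩ := Finset.card_eq_one.mp hPe1
          have hxPe : x ∈ P.erase σ := by rw [hxe]; simp
          have hxP : x ∈ P := Finset.mem_of_mem_erase hxPe
          have hxσ : x ≠ σ := Finset.ne_of_mem_erase hxPe
          have hxabc : x ∈ ({a, b, c} : Finset ℕ) := hPA hxP
          have hPeq : P = insert σ {x} := by
            refine (Finset.eq_of_subset_of_card_le ?_ ?_).symm
            · intro z hz
              rcases Finset.mem_insert.mp hz with rfl | hz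
              · exact hσP
              · rw [Finset.mem_singleton.mp hz]; exact hxP
            · rw [Finset.card_insert_of_notMem (by simp [Ne.symm hxσ]),
                Finset.card_singleton, hP2]
          have hR'e1 : (R'.erase σ).card = 1 := by
            rw [Finset.card_erase_of_mem hσR', hR'c]
          obtain ⟨sv, hsve⟩ := Finset.card_eq_one.mp hR'e1
          have hsvRe : sv ∈ R'.erase σ := by rw [hsve]; simp
          have hsvR : sv ∈ R' := Finset.mem_of_mem_erase hsvRe
          have hsvσ : sv ≠ σ := Finset.ne_of_mem_erase hsvRe
          have hsvabc : sv ∈ ({a, b, c} : Finset ℕ) := hR'abc hsvR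
          have hR'eq : R' = insert σ {sv} := by
            refine (Finset.eq_of_subset_of_card_le ?_ ?_).symm
            · intro z hz
              rcases Finset.mem_insert.mp hz with rfl | hz
              · exact hσR'
              · rw [Finset.mem_singleton.mp hz]; exact hsvR
            · rw [Finset.card_insert_of_notMem (by simp [Ne.symm hsvσ]),
                Finset.card_singleton, hR'c]
          have hxsv : x ≠ sv := by
            intro h
            apply hR'P
            rw [hR'eq, hPeq, h]
          have habceq : ({a, b, c} : Finset ℕ) = {σ, x, sv} := by
            refine (Finset.eq_of_subset_of_card_le ?_ ?_).symm
            · intro z hz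
              rcases Finset.mem_insert.mp hz with rfl | hz
              · exact hσabc
              rcases Finset.mem_insert.mp hz with rfl | hz
              · exact hxabc
              · rw [Finset.mem_singleton.mp hz]; exact hsvabc
            · rw [habc, Finset.card_insert_of_notMem (by simp [Ne.symm hxσ, Ne.symm hsvσ]),
                Finset.card_insert_of_notMem (by simp [hxsv]), Finset.card_singleton]
          have hfT4 : f T < 4 := hflt _ hTF
          have hTne : T.Nonempty := Finset.card_pos.mp (by omega)
          have hMTsub : MM (f T) hfT4 ⊆ T := hMMmin (f T) hfT4 T hTF rfl hTne
          have hMTne : (MM (f T) hfT4).Nonempty := (hMM (f T) hfT4).2.2.1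
          have hMTabc : MM (f T) hfT4 ⊆ ({a, b, c} : Finset ℕ) := (hMM (f T) hfT4).2.2.2
          -- σ ∉ T
          have hσT : σ ∉ T := by
            intro hσT'
            have hTe1 : (T.erase σ).card = 1 := by
              rw [Finset.card_erase_of_mem hσT', hTc]
            obtain ⟨y', hy'e⟩ := Finset.card_eq_one.mp hTe1
            have hy'Te : y' ∈ T.erase σ := by rw [hy'e]; simp
            have hy'T : y' ∈ T := Finset.mem_of_mem_erase hy'Te
            have hy'σ : y' ≠ σ := Finset.ne_of_mem_erase hy'Te
            have hTeq' : T = insert σ {y'} := by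
              refine (Finset.eq_of_subset_of_card_le ?_ ?_).symm
              · intro z hz
                rcases Finset.mem_insert.mp hz with rfl | hz
                · exact hσT'
                · rw [Finset.mem_singleton.mp hz]; exact hy'T
              · rw [Finset.card_insert_of_notMem (by simp [Ne.symm hy'σ]),
                  Finset.card_singleton, hTc]
            by_cases hy'M : y' ∈ MM (f T) hfT4
            · apply hTnabc
              rw [hTeq']
              intro z hz
              rcases Finset.mem_insert.mp hz with rfl | hz
              · exact hσabc
              · rw [Finset.mem_singleton.mp hz]
                exact hMTabc hy'M
            · have hMσ : MM (f T) hfT4 ⊆ {σ} := by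
                intro z hz
                have := hMTsub hz
                rw [hTeq'] at this
                rcases Finset.mem_insert.mp this with rfl | hzz
                · simp
                · rw [Finset.mem_singleton.mp hzz] at hz
                  exact absurd hz hy'M
              have : MM (f T) hfT4 = {σ} :=
                Finset.Nonempty.subset_singleton_iff hMTne |>.mp hMσ
              have hfσT : f ({σ} : Finset ℕ) = f T := by
                rw [← this]
                exact (hMM (f T) hfT4).2.1
              rw [hσf] at hfσT
              exact hTm hfσT.symm
          -- T = {xt, y} with xt ∈ {a,b,c}, y ∉ {a,b,c}
          obtain ⟨xt, hxtM⟩ := (hMM (f T) hfT4).2.2.1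
          have hxtT : xt ∈ T := hMTsub hxtM
          have hxtabc : xt ∈ ({a, b, c} : Finset ℕ) := hMTabc hxtM
          have hxtσ : xt ≠ σ := fun h => hσT (h ▸ hxtT)
          have hTe2 : (T.erase xt).card = 1 := by
            rw [Finset.card_erase_of_mem hxtT, hTc]
          obtain ⟨y, hye⟩ := Finset.card_eq_one.mp hTe2
          have hyTe : y ∈ T.erase xt := by rw [hye]; simp
          have hyT : y ∈ T := Finset.mem_of_mem_erase hyTe
          have hyxt : y ≠ xt := Finset.ne_of_mem_erase hyTe
          have hTeq : T = insert xt {y} := by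
            refine (Finset.eq_of_subset_of_card_le ?_ ?_).symm
            · intro z hz
              rcases Finset.mem_insert.mp hz with rfl | hz
              · exact hxtT
              · rw [Finset.mem_singleton.mp hz]; exact hyT
            · rw [Finset.card_insert_of_notMem (by simp [Ne.symm hyxt]),
                Finset.card_singleton, hTc]
          have hyabc : y ∉ ({a, b, c} : Finset ℕ) := by
            intro hy
            apply hTnabc
            rw [hTeq]
            intro z hz
            rcases Finset.mem_insert.mp hz with rfl | hz
            · exact hxtabc
            · rw [Finset.mem_singleton.mp hz]; exact hy
          have hMTeq : MM (f T) hfT4 = {xt} := by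
            apply Finset.Nonempty.subset_singleton_iff hMTne |>.mp
            intro z hz
            have := hMTsub hz
            rw [hTeq] at this
            rcases Finset.mem_insert.mp this with rfl | hzz
            · simp
            · rw [Finset.mem_singleton.mp hzz] at hz
              exact absurd (hMTabc hz) hyabc
          have hfxtT : f ({xt} : Finset ℕ) = f T := by
            rw [← hMTeq]
            exact (hMM (f T) hfT4).2.1
          have hxF' : ∀ z : ℕ, z ∈ ({a, b, c} : Finset ℕ) → ({z} : Finset ℕ) ∈ F := by
            intro z hz
            rcases Finset.mem_insert.mp hz with rfl | hz
            · exact haF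
            rcases Finset.mem_insert.mp hz with rfl | hz
            · exact hbF
            · rw [Finset.mem_singleton.mp hz]; exact hcF
          -- xt = x
          have hxtx : xt = x := by
            by_contra hxtx
            have hxts : xt = sv := by
              rw [habceq] at hxtabc
              rcases Finset.mem_insert.mp hxtabc with h | h
              · exact absurd h hxtσ
              rcases Finset.mem_insert.mp h with h | h
              · exact absurd h hxtx
              · exact Finset.mem_singleton.mp h
            subst hxts
            -- the minimum of fiber (f R') is R' itself
            have hfR'4 : f R' < 4 := hflt _ hR'F
            have hMR'sub : MM (f R') hfR'4 ⊆ R' := hMMmin (f R') hfR'4 R' hR'F rfl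
              (Finset.card_pos.mp (by omega))
            have hMR'ne : (MM (f R') hfR'4).Nonempty := (hMM (f R') hfR'4).2.2.1
            by_cases hsvM : xt ∈ MM (f R') hfR'4
            · by_cases hσM : σ ∈ MM (f R') hfR'4
              · -- MM (f R') = R'
                have hMR'eq : MM (f R') hfR'4 = R' := by
                  apply Finset.eq_of_subset_of_card_le hMR'sub
                  have hsub2 : R' ⊆ MM (f R') hfR'4 := by
                    intro z hz
                    rw [hR'eq] at hz
                    rcases Finset.mem_insert.mp hz with rfl | hz
                    · exact hσM
                    · rw [Finset.mem_singleton.mp hz]; exact hsvM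
                  exact Finset.card_le_card hsub2
                -- now consider the fiber of {x}
                have hxFmem : ({x} : Finset ℕ) ∈ F := hxF' x hxabc
                have hfx4 : f ({x} : Finset ℕ) < 4 := hflt _ hxFmem
                have hcover' : f ({x} : Finset ℕ) = m ∨ f ({x} : Finset ℕ) = f P ∨
                    f ({x} : Finset ℕ) = f T ∨ f ({x} : Finset ℕ) = f R' := by
                  clear * - hfx4 hfP4 hfT4 hfR'4 hm hTm hR'm hTfP hTR' hR'fP
                  have h1 := hm.1
                  have h2 := hm.2.1
                  omega
                rcases hcover' with h | h | h | h
                · have e1 := KF1' x hxFmem m hm.1 h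
                  have e2 := KF1' σ hσF m hm.1 hσf
                  rw [e2] at e1
                  exact hxσ (Finset.singleton_inj.mp e1).symm
                · have hPsub := hPmin {x} hxFmem (by rw [h, hPf]) (Finset.singleton_nonempty x)
                  have := Finset.card_le_card hPsub
                  simp [hP2] at this
                · have e1 := KF1' x hxFmem (f T) hfT4 h
                  rw [hMTeq] at e1
                  exact hxtx (Finset.singleton_inj.mp e1)
                · have e1 := KF1' x hxFmem (f R') hfR'4 h
                  rw [hMR'eq] at e1
                  have h2 := hR'c
                  rw [e1] at h2
                  simp at h2
              · -- MM (f R') = {xt} : its color equals f T, contradiction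
                have hMeq : MM (f R') hfR'4 = {xt} := by
                  apply Finset.Nonempty.subset_singleton_iff hMR'ne |>.mp
                  intro z hz
                  have := hMR'sub hz
                  rw [hR'eq] at this
                  rcases Finset.mem_insert.mp this with rfl | hzz
                  · exact absurd hz hσM
                  · rw [Finset.mem_singleton.mp hzz] at hz ⊢
                    simpa using hz
                have : f ({xt} : Finset ℕ) = f R' := by
                  rw [← hMeq]
                  exact (hMM (f R') hfR'4).2.1
                rw [hfxtT] at this
                exact hTR' this
            · -- MM (f R') = {σ} : its color is m, contradiction
              have hMeq : MM (f R') hfR'4 = {σ} := by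
                apply Finset.Nonempty.subset_singleton_iff hMR'ne |>.mp
                intro z hz
                have := hMR'sub hz
                rw [hR'eq] at this
                rcases Finset.mem_insert.mp this with rfl | hzz
                · simp
                · rw [Finset.mem_singleton.mp hzz] at hz
                  exact absurd hz hsvM
              have : f ({σ} : Finset ℕ) = f R' := by
                rw [← hMeq]
                exact (hMM (f R') hfR'4).2.1
              rw [hσf] at this
              exact hR'm this.symm
          -- the final witness at {y}
          subst hxtx
          have hyI : y ∈ Finset.Icc 1 n := hsub T hTF hyT
          have hyFno : ({y} : Finset ℕ) ∉ F := hsing_out y hyabc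
          obtain ⟨W, hWF, hWc, hWac, hWperp, hWtr⟩ :=
            hwit {y} (by simpa using hyI) hyFno
          obtain ⟨w, hwW, hwf⟩ := hWtr (f T) hfT4
          obtain ⟨v, hvW, hvf⟩ := hWtr (f P) hfP4
          have hwne : w.Nonempty := by
            rcases w.eq_empty_or_nonempty with rfl | h
            · exact absurd (Finset.empty_subset _) (hWperp _ hwW).1
            · exact h
          have hyw : y ∉ w :=
            fun h => (hWperp _ hwW).2 (Finset.singleton_subset_iff.mpr h)
          have hwx : w = {xt} := by
            rcases hch w (hWF hwW) T hTF (by rw [hwf]) with h | h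
            · apply Finset.Nonempty.subset_singleton_iff hwne |>.mp
              intro z hz
              have := h hz
              rw [hTeq] at this
              rcases Finset.mem_insert.mp this with rfl | hzz
              · simp
              · rw [Finset.mem_singleton.mp hzz] at hz
                exact absurd hz hyw
            · exact absurd (h hyT) hyw
          have hvne : v.Nonempty := by
            rcases v.eq_empty_or_nonempty with rfl | h
            · exact absurd (Finset.empty_subset _) (hWperp _ hvW).1
            · exact h
          have hPv : P ⊆ v := hPmin v (hWF hvW) (by rw [hvf, hPf]) hvne
          have hxv : xt ∈ v := hPv hxP
          have hwv : w ≠ v := by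
            intro h
            apply hTfP
            rw [← hwf, h, hvf]
          exact hWac w hwW v hvW hwv (by rw [hwx]; exact Finset.singleton_subset_iff.mpr hxv)

        rcases hTR with rfl | rfl
        · exact hendgame R₂ hR₂F hR₂c hR₂P (fun h => hm.2.2.2 h.symm) hfR₂P hfR₁R₂
            (fun h => hm.2.2.1 h.symm) hfR₁P (fun V hV => by
              rcases hL2eq V hV with h | h | h
              · exact Or.inl h
              · exact Or.inr (Or.inl h)
              · exact Or.inr (Or.inr h))
        · exact hendgame R₁ hR₁F hR₁c hR₁P (fun h => hm.2.2.1 h.symm) hfR₁P (Ne.symm hfR₁R₂)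
            (fun h => hm.2.2.2 h.symm) hfR₂P (fun V hV => by
              rcases hL2eq V hV with h | h | h
              · exact Or.inl h
              · exact Or.inr (Or.inr h)
              · exact Or.inr (Or.inl h))
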